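/- Let S ⊂ M be path-connected with a countable subset S₀ ⊂ S dense for the induced intrinsic metric d_S, and let 0 < ε < 1/2. If a 1-Lipschitz map f : M → ℝⁿ belongs to F_ε(x₀,y₀,S) for all x₀ ≠ y₀ ∈ S₀, then f ∈ F_{2ε}(x,y,S) for all x ≠ y ∈ S. -/

import Mathlib

open scoped ENNReal

/-- A rectifiable curve in `S` from `x` to `y`, parametrized on `[0,1]`. -/
def IsCurve {M : Type*} [MetricSpace M] (S : Set M) (x y : M) (γ : ℝ → M) : Prop :=
  ContinuousOn γ (Set.Icc 0 1) ∧ Set.MapsTo γ (Set.Icc 0 1) S ∧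
    γ 0 = x ∧ γ 1 = y ∧ eVariationOn γ (Set.Icc 0 1) ≠ ⊤

/-- The intrinsic distance in `S` : the infimum of lengths of rectifiable curves
in `S` joining `x` to `y`. -/
noncomputable def dS {M : Type*} [MetricSpace M] (S : Set M) (x y : M) : ℝ≥0∞ :=
  ⨅ (γ : ℝ → M) (_ : IsCurve S x y γ), eVariationOn γ (Set.Icc 0 1)

/-- The condition defining `F_ε(x,y,S)` for a map `f : M → ℝⁿ`:
`ℓ(f∘γ) + ε ℓ(γ) > (1-ε) d_S(x,y)` for every rectifiable curve `γ` in `S`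
from `x` to `y`. -/
def MemF {M : Type*} [MetricSpace M] (n : ℕ) (ε : ℝ) (S : Set M) (x y : M)
    (f : M → EuclideanSpace ℝ (Fin n)) : Prop :=
  ∀ γ : ℝ → M, IsCurve S x y γ →
    ENNReal.ofReal (1 - ε) * dS S x y <
      eVariationOn (f ∘ γ) (Set.Icc 0 1) + ENNReal.ofReal ε * eVariationOn γ (Set.Icc 0 1)

open Set

section CurveAux

variable {E : Type*} [PseudoEMetricSpace E]

/-- Reversal of a curve on `[0,1]`. -/
def crev (u : ℝ → E) : ℝ → E := fun t => u (1 - t)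

/-- Concatenation of two curves on `[0,1]`. -/
noncomputable def ccat (u v : ℝ → E) : ℝ → E := fun t => if t ≤ 1/2 then u (2*t) else v (2*t - 1)

lemma crev_eVar (u : ℝ → E) :
    eVariationOn (crev u) (Icc 0 1) = eVariationOn u (Icc 0 1) := by
  have h : eVariationOn (u ∘ (fun t : ℝ => 1 - t)) (Icc 0 1)
      = eVariationOn u ((fun t : ℝ => 1 - t) '' Icc 0 1) :=
    eVariationOn.comp_eq_of_antitoneOn u _ (fun a ha b hb hab => by linarith)
  rw [Set.image_const_sub_Icc] at h
  rw [sub_self, sub_zero] at h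
  exact h

lemma ccat_eVar {u v : ℝ → E} (h : u 1 = v 0) :
    eVariationOn (ccat u v) (Icc 0 1)
      = eVariationOn u (Icc 0 1) + eVariationOn v (Icc 0 1) := by
  have key := eVariationOn.Icc_add_Icc (ccat u v) (s := Icc (0:ℝ) 1)
    (a := 0) (b := 1/2) (c := 1) (by norm_num) (by norm_num) (by norm_num)
  have e1 : Icc (0:ℝ) 1 ∩ Icc 0 (1/2) = Icc 0 (1/2) := by
    rw [Set.Icc_inter_Icc]; norm_num
  have e2 : Icc (0:ℝ) 1 ∩ Icc (1/2) 1 = Icc (1/2) 1 := by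
    rw [Set.Icc_inter_Icc]; norm_num
  have e3 : Icc (0:ℝ) 1 ∩ Icc 0 1 = Icc 0 1 := by simp
  rw [e1, e2, e3] at key
  have h1 : eVariationOn (ccat u v) (Icc 0 (1/2)) = eVariationOn u (Icc 0 1) := by
    have eq1 : EqOn (ccat u v) (u ∘ (fun t : ℝ => 2*t)) (Icc 0 (1/2)) := by
      intro t ht
      simp only [ccat, Function.comp_apply, if_pos ht.2]
    rw [eVariationOn.eq_of_eqOn eq1,
      eVariationOn.comp_eq_of_monotoneOn u _ (fun a _ b _ hab => by linarith)]
    congr 1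
    rw [show (fun t : ℝ => 2*t) = (fun t : ℝ => 2*t + 0) by funext t; ring,
      Set.image_affine_Icc' (by norm_num : (0:ℝ) < 2)]
    norm_num
  have h2 : eVariationOn (ccat u v) (Icc (1/2) 1) = eVariationOn v (Icc 0 1) := by
    have eq2 : EqOn (ccat u v) (v ∘ (fun t : ℝ => 2*t - 1)) (Icc (1/2) 1) := by
      intro t ht
      rcases lt_or_eq_of_le ht.1 with h' | h'
      · simp only [ccat, Function.comp_apply, if_neg (not_le.2 h')]
      · subst h'
        simp only [ccat, Function.comp_apply, if_pos le_rfl]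
        norm_num [h]
    rw [eVariationOn.eq_of_eqOn eq2,
      eVariationOn.comp_eq_of_monotoneOn v _ (fun a _ b _ hab => by linarith)]
    congr 1
    rw [show (fun t : ℝ => 2*t - 1) = (fun t : ℝ => 2*t + (-1)) by funext t; ring,
      Set.image_affine_Icc' (by norm_num : (0:ℝ) < 2)]
    norm_num
  rw [h1, h2] at key
  exact key.symm

end CurveAux

section CurveM

variable {M : Type*} [MetricSpace M] {S : Set M}

lemma IsCurve.rev {x y : M} {u : ℝ → M} (hu : IsCurve S x y u) :
    IsCurve S y x (crev u) := by
  obtain ⟨hc, hm, h0, h1, hv⟩ := hu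
  refine ⟨?_, ?_, by simp only [crev]; rw [sub_zero, h1], by
      simp only [crev]; rw [sub_self, h0], by rwa [crev_eVar]⟩
  · exact ContinuousOn.comp hc (Continuous.continuousOn (by fun_prop))
      (fun t ht => ⟨by linarith [ht.2], by linarith [ht.1]⟩)
  · intro t ht
    exact hm ⟨by linarith [ht.2], by linarith [ht.1]⟩

lemma IsCurve.cat {x y z : M} {u v : ℝ → M} (hu : IsCurve S x y u) (hv : IsCurve S y z v) :
    IsCurve S x z (ccat u v) := by
  obtain ⟨huc, hum, hu0, hu1, huv⟩ := hu
  obtain ⟨hvc, hvm, hv0, hv1, hvv⟩ := hv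
  have hmid : u 1 = v 0 := by rw [hu1, hv0]
  have heq1 : EqOn (ccat u v) (u ∘ (fun t : ℝ => 2*t)) (Icc 0 (1/2)) := by
    intro t ht; simp only [ccat, Function.comp_apply, if_pos ht.2]
  have heq2 : EqOn (ccat u v) (v ∘ (fun t : ℝ => 2*t - 1)) (Icc (1/2) 1) := by
    intro t ht
    rcases lt_or_eq_of_le ht.1 with h' | h'
    · simp only [ccat, Function.comp_apply, if_neg (not_le.2 h')]
    · subst h'
      simp only [ccat, Function.comp_apply, if_pos le_rfl]
      norm_num [hmid]
  have hc1 : ContinuousOn (ccat u v) (Icc 0 (1/2)) :=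
    (ContinuousOn.comp huc (Continuous.continuousOn (by fun_prop))
      (fun t ht => ⟨by linarith [ht.1], by linarith [ht.2]⟩)).congr heq1
  have hc2 : ContinuousOn (ccat u v) (Icc (1/2) 1) :=
    (ContinuousOn.comp hvc (Continuous.continuousOn (by fun_prop))
      (fun t ht => ⟨by linarith [ht.1], by linarith [ht.2]⟩)).congr heq2
  have hcc : ContinuousOn (ccat u v) (Icc 0 1) := by
    have : Icc (0:ℝ) 1 = Icc 0 (1/2) ∪ Icc (1/2) 1 := by
      rw [Set.Icc_union_Icc_eq_Icc] <;> norm_num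
    rw [this]
    intro p hp
    refine ContinuousWithinAt.union ?_ ?_
    · by_cases h : p ∈ Icc (0:ℝ) (1/2)
      · exact hc1 p h
      · exact continuousWithinAt_of_notMem_closure (by rwa [isClosed_Icc.closure_eq])
    · by_cases h : p ∈ Icc (1/2:ℝ) 1
      · exact hc2 p h
      · exact continuousWithinAt_of_notMem_closure (by rwa [isClosed_Icc.closure_eq])
  refine ⟨hcc, ?_, ?_, ?_, ?_⟩
  · intro t ht
    by_cases h : t ≤ 1/2
    · show (if t ≤ 1/2 then u (2*t) else v (2*t-1)) ∈ S
      rw [if_pos h]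
      exact hum ⟨by linarith [ht.1], by linarith⟩
    · show (if t ≤ 1/2 then u (2*t) else v (2*t-1)) ∈ S
      rw [if_neg h]
      exact hvm ⟨by push_neg at h; linarith, by linarith [ht.2]⟩
  · show (if (0:ℝ) ≤ 1/2 then u (2*0) else v (2*0-1)) = x
    rw [if_pos (by norm_num)]
    rw [show (2:ℝ)*0 = 0 by ring, hu0]
  · show (if (1:ℝ) ≤ 1/2 then u (2*1) else v (2*1-1)) = z
    rw [if_neg (by norm_num)]
    rw [show (2:ℝ)*1-1 = 1 by ring, hv1]
  · rw [ccat_eVar hmid]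
    exact ENNReal.add_ne_top.2 ⟨huv, hvv⟩

end CurveM

section MoreAux

variable {M : Type*} [MetricSpace M] {S : Set M}

lemma dS_le {x y : M} {γ : ℝ → M} (h : IsCurve S x y γ) :
    dS S x y ≤ eVariationOn γ (Icc 0 1) := iInf₂_le γ h

lemma exists_curve_of_dS_lt {x y : M} {c : ℝ≥0∞} (h : dS S x y < c) :
    ∃ γ, IsCurve S x y γ ∧ eVariationOn γ (Icc 0 1) < c := by
  simpa [dS, iInf_lt_iff] using h

lemma comp_ccat {E : Type*} (f : M → E) (u v : ℝ → M) :
    f ∘ ccat u v = ccat (f ∘ u) (f ∘ v) := by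
  funext t
  simp only [ccat, Function.comp_apply, apply_ite f]

lemma comp_crev {E : Type*} (f : M → E) (u : ℝ → M) :
    f ∘ crev u = crev (f ∘ u) := rfl

lemma lip_comp_eVar {E : Type*} [PseudoEMetricSpace E] {f : M → E}
    (hf : LipschitzWith 1 f) (σ : ℝ → M) (s : Set ℝ) :
    eVariationOn (f ∘ σ) s ≤ eVariationOn σ s := by
  have := (hf.lipschitzOnWith (s := Set.univ)).comp_eVariationOn_le
    (Set.mapsTo_univ σ s)
  simpa using this

lemma dS_pos {x y : M} (hxy : x ≠ y) : edist x y ≤ dS S x y := by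
  refine le_iInf₂ fun σ hσ => ?_
  have h := eVariationOn.edist_le σ (s := Icc (0:ℝ) 1) (x := 1) (y := 0)
    ⟨zero_le_one, le_rfl⟩ ⟨le_rfl, zero_le_one⟩
  rw [hσ.2.2.1, hσ.2.2.2.1] at h
  rwa [edist_comm] at h

end MoreAux


theorem stmt11 {M : Type*} [MetricSpace M] (n : ℕ) (S S₀ : Set M)
    (hS : IsPathConnected S) (hsub : S₀ ⊆ S) (hcount : S₀.Countable)
    (hdense : ∀ x ∈ S, ∀ δ : ℝ, 0 < δ → ∃ x₀ ∈ S₀, dS S x x₀ < ENNReal.ofReal δ)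
    (ε : ℝ) (hε0 : 0 < ε) (hε1 : ε < 1/2)
    (f : M → EuclideanSpace ℝ (Fin n)) (hf : LipschitzWith 1 f)
    (hF : ∀ x₀ ∈ S₀, ∀ y₀ ∈ S₀, x₀ ≠ y₀ → MemF n ε S x₀ y₀ f) :
    ∀ x ∈ S, ∀ y ∈ S, x ≠ y → MemF n (2 * ε) S x y f := by
  intro x hx y hy hxy γ hγ
  classical
  set L := eVariationOn γ (Set.Icc (0:ℝ) 1) with hLdef
  set A := eVariationOn (f ∘ γ) (Set.Icc (0:ℝ) 1) with hAdef
  set D := dS S x y with hDdef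
  have hDL : D ≤ L := dS_le hγ
  have hLtop : L ≠ ⊤ := hγ.2.2.2.2
  have hDtop : D ≠ ⊤ := fun h => hLtop (top_le_iff.1 (h ▸ hDL))
  have hD0 : D ≠ 0 := by
    intro h
    have h1 : edist x y ≤ D := dS_pos hxy
    rw [h, le_zero_iff, edist_eq_zero] at h1
    exact hxy h1
  have hεle1 : ENNReal.ofReal ε ≤ 1 := ENNReal.ofReal_le_one.2 (by linarith)
  have h1εle1 : ENNReal.ofReal (1 - ε) ≤ 1 := ENNReal.ofReal_le_one.2 (by linarith)
  -- key estimate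
  have key : ENNReal.ofReal (1 - ε) * D ≤ A + ENNReal.ofReal ε * L := by
    refine ENNReal.le_of_forall_pos_le_add fun η hη _ => ?_
    have hr : 0 < D.toReal := ENNReal.toReal_pos hD0 hDtop
    set r := D.toReal with hrdef
    set δ := min ((η : ℝ)/6) (r/3) with hδdef
    have hδ0 : 0 < δ := lt_min (by positivity) (by positivity)
    obtain ⟨x₀, hx₀S, hx₀⟩ := hdense x hx δ hδ0
    obtain ⟨y₀, hy₀S, hy₀⟩ := hdense y hy δ hδ0
    obtain ⟨α, hα, hαl⟩ := exists_curve_of_dS_lt hx₀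
    obtain ⟨β, hβ, hβl⟩ := exists_curve_of_dS_lt hy₀
    have hne : x₀ ≠ y₀ := by
      rintro rfl
      have hmid : α 1 = crev β 0 := by
        simp [crev, hα.2.2.2.1, hβ.2.2.2.1]
      have h1 : D ≤ eVariationOn (ccat α (crev β)) (Set.Icc 0 1) :=
        dS_le (hα.cat hβ.rev)
      rw [ccat_eVar hmid, crev_eVar] at h1
      have h2 : D < ENNReal.ofReal δ + ENNReal.ofReal δ :=
        lt_of_le_of_lt h1 (ENNReal.add_lt_add hαl hβl)
      rw [← ENNReal.ofReal_add hδ0.le hδ0.le] at h2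
      have h3 : ENNReal.ofReal (δ + δ) < D := by
        have : δ + δ < r := by
          have := min_le_right ((η : ℝ)/6) (r/3)
          rw [← hδdef] at this
          linarith
        calc ENNReal.ofReal (δ + δ) < ENNReal.ofReal r :=
              (ENNReal.ofReal_lt_ofReal_iff hr).2 this
          _ = D := ENNReal.ofReal_toReal hDtop
      exact absurd (h2.trans h3) (lt_irrefl _)
    -- the concatenated curve from x₀ to y₀
    have hγ' : IsCurve S x₀ y₀ (ccat (crev α) (ccat γ β)) :=
      (hα.rev).cat (hγ.cat hβ)
    have hmid1 : crev α 1 = ccat γ β 0 := by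
      have : ccat γ β 0 = γ 0 := by
        show (if (0:ℝ) ≤ 1/2 then γ (2*0) else β (2*0-1)) = γ 0
        rw [if_pos (by norm_num)]
        norm_num
      simp [crev, hα.2.2.1, this, hγ.2.2.1]
    have hmid2 : γ 1 = β 0 := by rw [hγ.2.2.2.1, hβ.2.2.1]
    have hlen : eVariationOn (ccat (crev α) (ccat γ β)) (Set.Icc 0 1)
        = eVariationOn α (Set.Icc 0 1) + (L + eVariationOn β (Set.Icc 0 1)) := by
      rw [ccat_eVar hmid1, crev_eVar, ccat_eVar hmid2]
    have hmid1' : crev (f ∘ α) 1 = ccat (f ∘ γ) (f ∘ β) 0 := by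
      have h0 : (f ∘ ccat γ β) 0 = ccat (f ∘ γ) (f ∘ β) 0 := by rw [comp_ccat]
      have h1 : crev (f ∘ α) 1 = (f ∘ crev α) 1 := by rw [comp_crev]
      rw [h1, ← h0]
      exact congrArg f hmid1
    have hmid2' : (f ∘ γ) 1 = (f ∘ β) 0 := congrArg f hmid2
    have hflen : eVariationOn (f ∘ ccat (crev α) (ccat γ β)) (Set.Icc 0 1)
        = eVariationOn (f ∘ α) (Set.Icc 0 1)
          + (A + eVariationOn (f ∘ β) (Set.Icc 0 1)) := by
      rw [comp_ccat, comp_crev, comp_ccat, ccat_eVar hmid1', crev_eVar,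
        ccat_eVar hmid2']
    -- triangle-type bound
    have htri : D ≤ (ENNReal.ofReal δ + ENNReal.ofReal δ) + dS S x₀ y₀ := by
      have h1 : D - (eVariationOn α (Set.Icc 0 1) + eVariationOn β (Set.Icc 0 1))
          ≤ dS S x₀ y₀ := by
        refine le_iInf₂ fun σ hσ => ?_
        rw [tsub_le_iff_left]
        have hm1 : α 1 = ccat σ (crev β) 0 := by
          have : ccat σ (crev β) 0 = σ 0 := by
            show (if (0:ℝ) ≤ 1/2 then σ (2*0) else crev β (2*0-1)) = σ 0
            rw [if_pos (by norm_num)]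
            norm_num
          rw [this, hα.2.2.2.1, hσ.2.2.1]
        have hm2 : σ 1 = crev β 0 := by
          simp [crev, hσ.2.2.2.1, hβ.2.2.2.1]
        have hc := dS_le (hα.cat (hσ.cat hβ.rev))
        rw [ccat_eVar hm1, ccat_eVar hm2, crev_eVar] at hc
        calc D ≤ eVariationOn α (Set.Icc 0 1)
              + (eVariationOn σ (Set.Icc 0 1) + eVariationOn β (Set.Icc 0 1)) := hc
          _ = (eVariationOn α (Set.Icc 0 1) + eVariationOn β (Set.Icc 0 1))
              + eVariationOn σ (Set.Icc 0 1) := by ring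
      have h2 := tsub_le_iff_left.1 h1
      refine h2.trans ?_
      gcongr
    -- apply hF
    have hFapp := hF x₀ hx₀S y₀ hy₀S hne _ hγ'
    have hbound : eVariationOn (f ∘ ccat (crev α) (ccat γ β)) (Set.Icc 0 1)
        + ENNReal.ofReal ε * eVariationOn (ccat (crev α) (ccat γ β)) (Set.Icc 0 1)
        ≤ (A + ENNReal.ofReal ε * L) + 4 * ENNReal.ofReal δ := by
      rw [hflen, hlen]
      have bα : eVariationOn (f ∘ α) (Set.Icc 0 1) ≤ ENNReal.ofReal δ :=
        (lip_comp_eVar hf α _).trans hαl.le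
      have bβ : eVariationOn (f ∘ β) (Set.Icc 0 1) ≤ ENNReal.ofReal δ :=
        (lip_comp_eVar hf β _).trans hβl.le
      calc eVariationOn (f ∘ α) (Set.Icc 0 1) + (A + eVariationOn (f ∘ β) (Set.Icc 0 1))
          + ENNReal.ofReal ε * (eVariationOn α (Set.Icc 0 1)
            + (L + eVariationOn β (Set.Icc 0 1)))
          = (A + ENNReal.ofReal ε * L)
            + (eVariationOn (f ∘ α) (Set.Icc 0 1) + eVariationOn (f ∘ β) (Set.Icc 0 1)
              + ENNReal.ofReal ε * (eVariationOn α (Set.Icc 0 1)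
                + eVariationOn β (Set.Icc 0 1))) := by ring
        _ ≤ (A + ENNReal.ofReal ε * L)
            + (ENNReal.ofReal δ + ENNReal.ofReal δ
              + 1 * (ENNReal.ofReal δ + ENNReal.ofReal δ)) := by
            gcongr
        _ = (A + ENNReal.ofReal ε * L) + 4 * ENNReal.ofReal δ := by ring
    -- put it together
    have h6 : (6 : ℝ≥0∞) * ENNReal.ofReal δ ≤ (η : ℝ≥0∞) := by
      have : (6 : ℝ≥0∞) * ENNReal.ofReal δ = ENNReal.ofReal (6 * δ) := by
        rw [ENNReal.ofReal_mul (by norm_num)]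
        norm_num
      rw [this]
      have hδη : 6 * δ ≤ (η : ℝ) := by
        have := min_le_left ((η : ℝ)/6) (r/3)
        rw [← hδdef] at this
        linarith
      calc ENNReal.ofReal (6 * δ) ≤ ENNReal.ofReal (η : ℝ) :=
            ENNReal.ofReal_le_ofReal hδη
        _ = (η : ℝ≥0∞) := ENNReal.ofReal_coe_nnreal
    calc ENNReal.ofReal (1 - ε) * D
        ≤ ENNReal.ofReal (1 - ε) * ((ENNReal.ofReal δ + ENNReal.ofReal δ) + dS S x₀ y₀) :=
          mul_le_mul_right htri _
      _ = ENNReal.ofReal (1 - ε) * (ENNReal.ofReal δ + ENNReal.ofReal δ)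
          + ENNReal.ofReal (1 - ε) * dS S x₀ y₀ := mul_add _ _ _
      _ ≤ 1 * (ENNReal.ofReal δ + ENNReal.ofReal δ)
          + ((A + ENNReal.ofReal ε * L) + 4 * ENNReal.ofReal δ) :=
          add_le_add (mul_le_mul_left h1εle1 _) (hFapp.le.trans hbound)
      _ = (A + ENNReal.ofReal ε * L) + 6 * ENNReal.ofReal δ := by ring
      _ ≤ (A + ENNReal.ofReal ε * L) + (η : ℝ≥0∞) := add_le_add_right h6 _
  -- conclude
  have hlt : ENNReal.ofReal (1 - 2 * ε) * D < ENNReal.ofReal (1 - ε) * D :=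
    ENNReal.mul_lt_mul_left hD0 hDtop
      ((ENNReal.ofReal_lt_ofReal_iff (by linarith)).2 (by linarith))
  calc ENNReal.ofReal (1 - 2 * ε) * D < ENNReal.ofReal (1 - ε) * D := hlt
    _ ≤ A + ENNReal.ofReal ε * L := key
    _ ≤ A + ENNReal.ofReal (2 * ε) * L := by
        gcongr
        all_goals first | exact ENNReal.ofReal_le_ofReal (by linarith) | linarith
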